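/- For any r×r matrix H, the second derivative at t = 0 of t ↦ K_J(I_r + tH) equals 2·tr(H²), and the second derivative at t = 0 of t ↦ K_α(I_r + tH) equals (α − α²)·tr(H²). -/

import Mathlib

/-- Complex-valued Kullback–Leibler discrimination `K_I(A) = tr A − log det A − r`. -/
noncomputable def KIc {r : ℕ} (A : Matrix (Fin r) (Fin r) ℂ) : ℂ :=
  A.trace - Complex.log A.det - r

/-- The J-divergence `K_J(A) = K_I(A) + K_I(A⁻¹)`. -/
noncomputable def KJc {r : ℕ} (A : Matrix (Fin r) (Fin r) ℂ) : ℂ :=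
  KIc A + KIc A⁻¹

/-- The Chernoff information measure `K_α(A) = log det(αA + (1−α)I) − α log det A`. -/
noncomputable def Kalphac {r : ℕ} (α : ℝ) (A : Matrix (Fin r) (Fin r) ℂ) : ℂ :=
  Complex.log ((α : ℂ) • A + ((1 - α : ℝ) : ℂ) • (1 : Matrix (Fin r) (Fin r) ℂ)).det
    - (α : ℂ) * Complex.log A.det

section Aux

open Matrix Polynomial Filter Complex
open scoped Topology

attribute [local instance] Matrix.linftyOpNormedRing Matrix.linftyOpNormedAlgebra

variable {r : ℕ}

/-- Trace as a continuous linear map. -/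
noncomputable def trCLM (r : ℕ) : Matrix (Fin r) (Fin r) ℂ →L[ℂ] ℂ :=
  LinearMap.toContinuousLinearMap (Matrix.traceLinearMap (Fin r) ℂ ℂ)

@[simp] lemma trCLM_apply (A : Matrix (Fin r) (Fin r) ℂ) : trCLM r A = A.trace := rfl

/-- Real smul on complex matrices is complex smul of the coercion. -/
lemma rsmul_eq (t : ℝ) (M : Matrix (Fin r) (Fin r) ℂ) : t • M = (t : ℂ) • M := by
  rw [show ((t : ℂ)) = algebraMap ℝ ℂ t from rfl, algebraMap_smul]

/-- Restriction of a complex-differentiable function to the reals. -/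
lemma HasDerivAt.ofRealComp {F : ℂ → ℂ} {f' : ℂ} {t : ℝ}
    (hf : HasDerivAt F f' (t : ℂ)) : HasDerivAt (fun s : ℝ => F (s : ℂ)) f' t :=
  hf.comp_ofReal

lemma det_line_hasDerivAt_zero (N : Matrix (Fin r) (Fin r) ℂ) :
    HasDerivAt (fun z : ℂ => (1 + z • N).det) N.trace 0 := by
  set Q := ((1 + (X : ℂ[X]) • N.map C).det).divX.divX with hQ
  have key : (fun z : ℂ => (1 + z • N).det)
      = fun z : ℂ => 1 + N.trace * z + Q.eval z * z ^ 2 :=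
    funext fun z => Matrix.det_one_add_smul z N
  rw [key]
  have h1 : HasDerivAt (fun z : ℂ => 1 + N.trace * z) N.trace 0 := by
    simpa using ((hasDerivAt_id (0 : ℂ)).const_mul N.trace).const_add 1
  have h2 : HasDerivAt (fun z : ℂ => Q.eval z * z ^ 2) 0 0 := by
    simpa [Pi.mul_def] using (Q.hasDerivAt (0 : ℂ)).mul (hasDerivAt_pow 2 (0 : ℂ))
  simpa [Pi.add_def] using h1.add h2

lemma det_line_hasDerivAt (M : Matrix (Fin r) (Fin r) ℂ) {w : ℂ}
    (hu : IsUnit (1 + w • M).det) :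
    HasDerivAt (fun z : ℂ => (1 + z • M).det)
      ((1 + w • M).det * ((1 + w • M)⁻¹ * M).trace) w := by
  set A₀ := 1 + w • M with hA₀
  have fact : ∀ z : ℂ, 1 + z • M = A₀ * (1 + (z - w) • (A₀⁻¹ * M)) := by
    intro z
    have h1 : A₀ * (A₀⁻¹ * M) = M := by
      rw [← Matrix.mul_assoc, Matrix.mul_nonsing_inv _ hu, Matrix.one_mul]
    rw [Matrix.mul_add, Matrix.mul_one, mul_smul_comm, h1, sub_smul, hA₀]
    abel
  have h0 : HasDerivAt (fun z : ℂ => (1 + z • (A₀⁻¹ * M)).det) (A₀⁻¹ * M).trace 0 :=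
    det_line_hasDerivAt_zero _
  have h1 : HasDerivAt (fun z : ℂ => (1 + (z - w) • (A₀⁻¹ * M)).det) (A₀⁻¹ * M).trace w :=
    HasDerivAt.comp_sub_const (f := fun z : ℂ => (1 + z • (A₀⁻¹ * M)).det) w w
      (by simpa using h0)
  have h2 := h1.const_mul A₀.det
  have key : (fun z : ℂ => (1 + z • M).det)
      = fun z : ℂ => A₀.det * (1 + (z - w) • (A₀⁻¹ * M)).det :=
    funext fun z => by rw [fact z, Matrix.det_mul]
  rw [key]
  exact h2

lemma eventually_det_slitPlane (M : Matrix (Fin r) (Fin r) ℂ) :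
    ∀ᶠ z in nhds (0 : ℂ), (1 + z • M).det ∈ slitPlane := by
  set Q := ((1 + (X : ℂ[X]) • M.map C).det).divX.divX with hQ
  have key : (fun z : ℂ => (1 + z • M).det)
      = fun z : ℂ => 1 + M.trace * z + Q.eval z * z ^ 2 :=
    funext fun z => Matrix.det_one_add_smul z M
  have hcont : Continuous fun z : ℂ => (1 + z • M).det := by
    rw [key]
    exact (continuous_const.add (continuous_const.mul continuous_id)).add
      (Q.continuous.mul (continuous_pow 2))
  exact (hcont.continuousAt (x := (0 : ℂ))).eventually_mem
    (isOpen_slitPlane.mem_nhds (by simp))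

lemma line_hasDerivAt (M : Matrix (Fin r) (Fin r) ℂ) (w : ℂ) :
    HasDerivAt (fun z : ℂ => 1 + z • M) M w := by
  exact (((hasDerivAt_id w).smul_const M).const_add (1 : Matrix (Fin r) (Fin r) ℂ)).congr_deriv
    (one_smul _ _)

lemma inv_line_hasDerivAt (M : Matrix (Fin r) (Fin r) ℂ) {w : ℂ}
    (hu : IsUnit (1 + w • M)) :
    HasDerivAt (fun z : ℂ => (1 + z • M)⁻¹)
      (-((1 + w • M)⁻¹ * M * (1 + w • M)⁻¹)) w := by
  have hA := line_hasDerivAt M w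
  have hfd := hasFDerivAt_ringInverse (𝕜 := ℂ) hu.unit
  have hcomp := hfd.comp_hasDerivAt w hA
  have hinv_eq : ((hu.unit⁻¹ : _) : Matrix (Fin r) (Fin r) ℂ) = (1 + w • M)⁻¹ := by
    rw [Matrix.nonsing_inv_eq_ringInverse]
    conv_rhs => rw [← hu.unit_spec]
    rw [Ring.inverse_unit]
  have key : (fun z : ℂ => (1 + z • M)⁻¹) = fun z : ℂ => Ring.inverse (1 + z • M) :=
    funext fun z => Matrix.nonsing_inv_eq_ringInverse _
  rw [key]
  refine hcomp.congr_deriv ?_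
  simp [ContinuousLinearMap.mulLeftRight_apply, hinv_eq]

lemma logdet_hasDerivAt (M : Matrix (Fin r) (Fin r) ℂ) {w : ℂ}
    (hs : (1 + w • M).det ∈ slitPlane) :
    HasDerivAt (fun z : ℂ => Complex.log (1 + z • M).det)
      ((1 + w • M)⁻¹ * M).trace w := by
  have hne : (1 + w • M).det ≠ 0 := slitPlane_ne_zero hs
  have hu : IsUnit (1 + w • M).det := isUnit_iff_ne_zero.mpr hne
  have h := (det_line_hasDerivAt M hu).clog hs
  convert h using 1
  rw [mul_comm, mul_div_assoc, div_self hne, mul_one]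

/-- Derivative at `0` of `z ↦ tr ((1+zM)⁻¹ M)`. -/
lemma trinv_mul_hasDerivAt_zero (M : Matrix (Fin r) (Fin r) ℂ) :
    HasDerivAt (fun z : ℂ => ((1 + z • M)⁻¹ * M).trace) (-(M * M).trace) 0 := by
  have hu : IsUnit (1 + (0 : ℂ) • M) := by simpa using isUnit_one
  have hinv := inv_line_hasDerivAt M hu
  have h := ((trCLM r).hasFDerivAt).comp_hasDerivAt 0 (hinv.mul_const M)
  refine h.congr_deriv ?_
  simp
  change Matrix.trace (_ : Matrix (Fin r) (Fin r) ℂ) = _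
  simp

/-- Derivative at `0` of `z ↦ tr ((1+zM)⁻¹ M (1+zM)⁻¹)`. -/
lemma trinvinv_hasDerivAt_zero (M : Matrix (Fin r) (Fin r) ℂ) :
    HasDerivAt (fun z : ℂ => ((1 + z • M)⁻¹ * M * (1 + z • M)⁻¹).trace)
      (-(2 * (M * M).trace)) 0 := by
  have hu : IsUnit (1 + (0 : ℂ) • M) := by simpa using isUnit_one
  have hinv := inv_line_hasDerivAt M hu
  have hP := (hinv.mul_const M).mul hinv
  have h := ((trCLM r).hasFDerivAt).comp_hasDerivAt 0 hP
  refine h.congr_deriv ?_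
  simp [Matrix.trace_add, two_mul]
  change Matrix.trace (_ : Matrix (Fin r) (Fin r) ℂ) = _
  simp [Matrix.trace_add]

/-- Second derivatives at the identity: `d²/dt² K_J(I + tH)|₀ = 2 tr(H²)` and
`d²/dt² K_α(I + tH)|₀ = (α − α²) tr(H²)`. -/
theorem KJ_Kalpha_second_deriv_at_one {r : ℕ} (α : ℝ) (hα : 0 < α) (hα1 : α < 1)
    (H : Matrix (Fin r) (Fin r) ℂ) :
    iteratedDeriv 2 (fun t : ℝ => KJc ((1 : Matrix (Fin r) (Fin r) ℂ) + t • H)) 0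
      = 2 * (H * H).trace ∧
    iteratedDeriv 2 (fun t : ℝ => Kalphac α ((1 : Matrix (Fin r) (Fin r) ℂ) + t • H)) 0
      = ((α - α ^ 2 : ℝ) : ℂ) * (H * H).trace := by
  have hcR : Filter.Tendsto (fun t : ℝ => (t : ℂ)) (nhds 0) (nhds 0) :=
    Complex.continuous_ofReal.tendsto' 0 0 rfl
  constructor
  · -- K_J part
    have hev : ∀ᶠ z in nhds (0 : ℂ), (1 + z • H).det ∈ slitPlane :=
      eventually_det_slitPlane H
    have hevU : ∀ᶠ z in nhds (0 : ℂ), IsUnit (1 + z • H) := hev.mono fun z hz =>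
      (Matrix.isUnit_iff_isUnit_det _).mpr (isUnit_iff_ne_zero.mpr (slitPlane_ne_zero hz))
    have e1 : (fun t : ℝ => KJc (1 + t • H)) =ᶠ[nhds (0 : ℝ)]
        fun t : ℝ => (1 + (t : ℂ) • H).trace + ((1 + (t : ℂ) • H)⁻¹).trace - 2 * (r : ℂ) := by
      filter_upwards [hcR.eventually hev] with t ht
      have hd : ((1 + (t : ℂ) • H)⁻¹).det = ((1 + (t : ℂ) • H).det)⁻¹ := by
        rw [Matrix.det_nonsing_inv, Ring.inverse_eq_inv']
      simp only [KJc, KIc, rsmul_eq]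
      rw [hd, Complex.log_inv _ (mem_slitPlane_iff_arg.mp ht).1]
      ring
    rw [iteratedDeriv_succ, iteratedDeriv_one]
    have e2 := e1.deriv
    have e3 : deriv (fun t : ℝ =>
          (1 + (t : ℂ) • H).trace + ((1 + (t : ℂ) • H)⁻¹).trace - 2 * (r : ℂ))
        =ᶠ[nhds (0 : ℝ)]
        fun t : ℝ => H.trace - ((1 + (t : ℂ) • H)⁻¹ * H * (1 + (t : ℂ) • H)⁻¹).trace := by
      filter_upwards [hcR.eventually hevU] with t ht
      have h1 : HasDerivAt
          (fun z : ℂ => (1 + z • H).trace + ((1 + z • H)⁻¹).trace - 2 * (r : ℂ))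
          (H.trace - ((1 + (t : ℂ) • H)⁻¹ * H * (1 + (t : ℂ) • H)⁻¹).trace) (t : ℂ) := by
        have ha := ((trCLM r).hasFDerivAt).comp_hasDerivAt _ (line_hasDerivAt H (t : ℂ))
        have hb := ((trCLM r).hasFDerivAt).comp_hasDerivAt _ (inv_line_hasDerivAt H ht)
        have hc := (ha.add hb).sub_const (2 * (r : ℂ))
        refine hc.congr_deriv ?_
        simp [sub_eq_add_neg]
        change Matrix.trace (_ : Matrix (Fin r) (Fin r) ℂ) + Matrix.trace (_ : Matrix (Fin r) (Fin r) ℂ) = _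
        simp
      exact h1.ofRealComp.deriv
    rw [(e2.trans e3).deriv_eq]
    have h4 : HasDerivAt
        (fun z : ℂ => H.trace - ((1 + z • H)⁻¹ * H * (1 + z • H)⁻¹).trace)
        (2 * (H * H).trace) 0 := by
      have h := (hasDerivAt_const (0 : ℂ) H.trace).sub (trinvinv_hasDerivAt_zero H)
      simpa [Pi.sub_def] using h
    have h5 : HasDerivAt
        (fun t : ℝ => H.trace - ((1 + (t : ℂ) • H)⁻¹ * H * (1 + (t : ℂ) • H)⁻¹).trace)
        (2 * (H * H).trace) 0 :=
      HasDerivAt.ofRealComp (t := 0) (by rw [Complex.ofReal_zero]; exact h4)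
    exact h5.deriv
  · -- K_α part
    have hev1 : ∀ᶠ z in nhds (0 : ℂ), (1 + z • ((α : ℂ) • H)).det ∈ slitPlane :=
      eventually_det_slitPlane _
    have hev2 : ∀ᶠ z in nhds (0 : ℂ), (1 + z • H).det ∈ slitPlane :=
      eventually_det_slitPlane H
    have hfun : (fun t : ℝ => Kalphac α (1 + t • H))
        = fun t : ℝ => Complex.log (1 + (t : ℂ) • ((α : ℂ) • H)).det
            - (α : ℂ) * Complex.log (1 + (t : ℂ) • H).det := by
      funext t
      have harg : (α : ℂ) • ((1 : Matrix (Fin r) (Fin r) ℂ) + (t : ℂ) • H)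
            + ((1 - α : ℝ) : ℂ) • (1 : Matrix (Fin r) (Fin r) ℂ)
          = 1 + (t : ℂ) • ((α : ℂ) • H) := by
        push_cast
        rw [smul_add, smul_comm, add_right_comm, ← add_smul]
        norm_num
      simp only [Kalphac, rsmul_eq, harg]
    rw [hfun, iteratedDeriv_succ, iteratedDeriv_one]
    have e3 : deriv (fun t : ℝ => Complex.log (1 + (t : ℂ) • ((α : ℂ) • H)).det
          - (α : ℂ) * Complex.log (1 + (t : ℂ) • H).det)
        =ᶠ[nhds (0 : ℝ)]
        fun t : ℝ => ((1 + (t : ℂ) • ((α : ℂ) • H))⁻¹ * ((α : ℂ) • H)).trace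
          - (α : ℂ) * ((1 + (t : ℂ) • H)⁻¹ * H).trace := by
      filter_upwards [hcR.eventually hev1, hcR.eventually hev2] with t h1 h2
      exact (HasDerivAt.ofRealComp ((logdet_hasDerivAt _ h1).sub
        ((logdet_hasDerivAt H h2).const_mul (α : ℂ)))).deriv
    rw [e3.deriv_eq]
    have h4 : HasDerivAt
        (fun z : ℂ => ((1 + z • ((α : ℂ) • H))⁻¹ * ((α : ℂ) • H)).trace
          - (α : ℂ) * ((1 + z • H)⁻¹ * H).trace)
        (((α - α ^ 2 : ℝ) : ℂ) * (H * H).trace) 0 := by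
      have ha := trinv_mul_hasDerivAt_zero ((α : ℂ) • H)
      have hb := (trinv_mul_hasDerivAt_zero H).const_mul (α : ℂ)
      have hc := ha.sub hb
      refine hc.congr_deriv ?_
      rw [show ((α : ℂ) • H) * ((α : ℂ) • H) = ((α : ℂ) * (α : ℂ)) • (H * H) by
        rw [smul_mul_smul_comm]]
      rw [Matrix.trace_smul]
      push_cast
      simp only [smul_eq_mul]
      ring
    have h5 : HasDerivAt
        (fun t : ℝ => ((1 + (t : ℂ) • ((α : ℂ) • H))⁻¹ * ((α : ℂ) • H)).trace
          - (α : ℂ) * ((1 + (t : ℂ) • H)⁻¹ * H).trace)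
        (((α - α ^ 2 : ℝ) : ℂ) * (H * H).trace) 0 :=
      HasDerivAt.ofRealComp (t := 0) (by rw [Complex.ofReal_zero]; exact h4)
    exact h5.deriv

end Aux
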